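/- Let D ⊆ ℂ^d be an unbounded ℂ-proper convex domain. If (z_n) and (w_n) are sequences in D with ‖z_n‖ → ∞ and w_n → ξ for some ξ ∈ ∂D, then K_D(z_n, w_n) → ∞. -/

import Mathlib

open Set Metric Filter

noncomputable section

/-- Inverse hyperbolic tangent, `artanh x = (1/2) log((1+x)/(1-x))`. -/
def artanh (x : ℝ) : ℝ := Real.log ((1 + x) / (1 - x)) / 2

/-- The Poincaré distance on the unit disc `𝔻 ⊆ ℂ`:
`ρ(a,b) = artanh |(a − b)/(1 − conj(a)·b)|`. -/
def poincareDist (a b : ℂ) : ℝ :=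
  artanh (‖(a - b) / (1 - (starRingEnd ℂ) a * b)‖)

/-- The Kobayashi pseudodistance on a domain `D ⊆ ℂ^d`: the infimum of `Σ ρ(aᵢ,bᵢ)` over all
finite chains of holomorphic maps `fᵢ : 𝔻 → D` with `f₁(a₁) = x`, `fᵢ(bᵢ) = fᵢ₊₁(aᵢ₊₁)` and
`f_N(b_N) = y`. -/
def kobayashiDist {d : ℕ} (D : Set (EuclideanSpace ℂ (Fin d)))
    (x y : EuclideanSpace ℂ (Fin d)) : ℝ :=
  sInf {c : ℝ | ∃ (N : ℕ) (f : Fin (N + 1) → ℂ → EuclideanSpace ℂ (Fin d))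
      (a b : Fin (N + 1) → ℂ),
    (∀ i, DifferentiableOn ℂ (f i) (Metric.ball (0 : ℂ) 1)) ∧
    (∀ i, Set.MapsTo (f i) (Metric.ball (0 : ℂ) 1) D) ∧
    (∀ i, a i ∈ Metric.ball (0 : ℂ) 1) ∧ (∀ i, b i ∈ Metric.ball (0 : ℂ) 1) ∧
    f 0 (a 0) = x ∧ f (Fin.last N) (b (Fin.last N)) = y ∧
    (∀ i : Fin N, f (Fin.castSucc i) (b (Fin.castSucc i)) = f (Fin.succ i) (a (Fin.succ i))) ∧
    c = ∑ i, poincareDist (a i) (b i)}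

/-- A domain `D ⊆ ℂ^d` is ℂ-proper if it contains no complex affine line. -/
def CProper {d : ℕ} (D : Set (EuclideanSpace ℂ (Fin d))) : Prop :=
  ¬ ∃ (z v : EuclideanSpace ℂ (Fin d)), v ≠ 0 ∧ ∀ t : ℂ, z + t • v ∈ D



open Complex ComplexConjugate

/-- Möbius map of the disc. -/
def mob (a z : ℂ) : ℂ := (z - a) / (1 - conj a * z)

lemma normSq_mob_identity (a z : ℂ) :
    normSq (1 - conj a * z) - normSq (z - a) = (1 - normSq a) * (1 - normSq z) := by
  simp only [normSq_apply, sub_re, sub_im, one_re, one_im, mul_re, mul_im, conj_re, conj_im]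
  ring

lemma one_sub_conj_mul_ne (a z : ℂ) (ha : ‖a‖ < 1) (hz : ‖z‖ < 1) :
    1 - conj a * z ≠ 0 := by
  intro h
  have h1 : normSq a < 1 := by
    have := Complex.sq_norm a
    nlinarith [norm_nonneg a]
  have h2 : normSq z < 1 := by
    have := Complex.sq_norm z
    nlinarith [norm_nonneg z]
  have := normSq_mob_identity a z
  rw [h, normSq_zero] at this
  nlinarith [normSq_nonneg (z - a)]

lemma abs_mob_lt (a z : ℂ) (ha : ‖a‖ < 1) (hz : ‖z‖ < 1) :
    ‖mob a z‖ < 1 := by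
  have h1 : normSq a < 1 := by
    have := Complex.sq_norm a
    nlinarith [norm_nonneg a]
  have h2 : normSq z < 1 := by
    have := Complex.sq_norm z
    nlinarith [norm_nonneg z]
  have hkey := normSq_mob_identity a z
  have hne := one_sub_conj_mul_ne a z ha hz
  have hpos : 0 < normSq (1 - conj a * z) := normSq_pos.2 hne
  have habs : 0 < ‖1 - conj a * z‖ := norm_pos_iff.mpr hne
  rw [mob, norm_div, div_lt_one habs]
  have : normSq (z - a) < normSq (1 - conj a * z) := by nlinarith
  have h3 := Complex.sq_norm (z - a)
  have h4 := Complex.sq_norm (1 - conj a * z)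
  nlinarith [norm_nonneg (z - a), norm_nonneg (1 - conj a * z)]

lemma mob_mapsTo (a : ℂ) (ha : a ∈ ball (0:ℂ) 1) :
    MapsTo (mob a) (ball (0:ℂ) 1) (ball (0:ℂ) 1) := by
  intro z hz
  rw [mem_ball_zero_iff] at *
  simpa using abs_mob_lt a z (by simpa using ha) (by simpa using hz)

lemma mob_diff (a : ℂ) (ha : a ∈ ball (0:ℂ) 1) :
    DifferentiableOn ℂ (mob a) (ball (0:ℂ) 1) := by
  rw [mem_ball_zero_iff] at ha
  apply DifferentiableOn.div
  · exact (differentiable_id.sub_const a).differentiableOn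
  · exact ((differentiable_const _).sub ((differentiable_const _).mul differentiable_id)).differentiableOn
  · intro z hz
    rw [mem_ball_zero_iff] at hz
    exact one_sub_conj_mul_ne a z ha hz

lemma mob_inv (a z : ℂ) (ha : ‖a‖ < 1) (hz : ‖z‖ < 1) :
    mob (-a) (mob a z) = z := by
  have hne := one_sub_conj_mul_ne a z ha hz
  have hne2 : 1 - conj a * a ≠ 0 := one_sub_conj_mul_ne a a ha ha
  have hden : 1 - conj (-a) * mob a z = (1 - conj a * a) / (1 - conj a * z) := by
    rw [mob, eq_div_iff hne, sub_mul, mul_assoc (conj (-a)), div_mul_cancel₀ _ hne, map_neg]; ring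
  rw [mob, hden, mob, div_div_eq_mul_div, div_eq_iff hne2, sub_mul, div_mul_cancel₀ _ hne]
  ring

/-- Half-plane to disc: `ψ_{p,c}(w) = (w - p)/(w + conj p - 2c)` maps `{Re < c}` to `𝔻`. -/
def psi (c : ℝ) (p w : ℂ) : ℂ := (w - p) / (w + conj p - 2 * c)

lemma normSq_psi_identity (c : ℝ) (p w : ℂ) :
    normSq (w + conj p - 2 * c) - normSq (w - p) = 4 * (c - p.re) * (c - w.re) := by
  simp only [normSq_apply, sub_re, sub_im, add_re, add_im, mul_re, mul_im, conj_re, conj_im,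
    Complex.ofReal_re, Complex.ofReal_im, Complex.re_ofNat, Complex.im_ofNat]
  ring

lemma psi_den_re (c : ℝ) (p w : ℂ) (hp : p.re < c) (hw : w.re < c) :
    (w + conj p - 2 * c).re < 0 := by
  simp only [sub_re, add_re, conj_re, mul_re, Complex.ofReal_re, Complex.ofReal_im,
    Complex.re_ofNat, Complex.im_ofNat]
  norm_num
  linarith

lemma psi_den_ne (c : ℝ) (p w : ℂ) (hp : p.re < c) (hw : w.re < c) :
    w + conj p - 2 * c ≠ 0 := by
  intro h
  have := psi_den_re c p w hp hw
  rw [h] at this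
  simp at this

lemma abs_psi_lt (c : ℝ) (p w : ℂ) (hp : p.re < c) (hw : w.re < c) :
    ‖psi c p w‖ < 1 := by
  have hne := psi_den_ne c p w hp hw
  have hkey := normSq_psi_identity c p w
  have hpos : 0 < normSq (w + conj p - 2 * c) := normSq_pos.2 hne
  have habs : 0 < ‖w + conj p - 2 * c‖ := norm_pos_iff.mpr hne
  rw [psi, norm_div, div_lt_one habs]
  have h1 : normSq (w - p) < normSq (w + conj p - 2 * c) := by nlinarith
  have h3 := Complex.sq_norm (w - p)
  have h4 := Complex.sq_norm (w + conj p - 2 * c)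
  nlinarith [norm_nonneg (w - p), norm_nonneg (w + conj p - 2 * c)]

/-- **Schwarz–Pick type estimate** for a holomorphic map of the disc into a half-plane. -/
lemma schwarz_pick_halfplane (g : ℂ → ℂ) (hg : DifferentiableOn ℂ g (ball 0 1)) (c : ℝ)
    (hgc : ∀ ζ ∈ ball (0:ℂ) 1, (g ζ).re < c) {a b : ℂ}
    (ha : a ∈ ball (0:ℂ) 1) (hb : b ∈ ball (0:ℂ) 1) :
    ‖psi c (g a) (g b)‖ ≤ ‖mob a b‖ := by
  have ha' : ‖a‖ < 1 := by simpa [mem_ball_zero_iff] using ha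
  have hb' : ‖b‖ < 1 := by simpa [mem_ball_zero_iff] using hb
  have hma : (-a) ∈ ball (0:ℂ) 1 := by simpa [mem_ball_zero_iff] using ha'
  set h : ℂ → ℂ := fun ζ => psi c (g a) (g (mob (-a) ζ)) with hh
  have hGdiff : DifferentiableOn ℂ (fun ζ => g (mob (-a) ζ)) (ball (0:ℂ) 1) :=
    hg.comp (mob_diff (-a) hma) (mob_mapsTo (-a) hma)
  have hGre : ∀ ζ ∈ ball (0:ℂ) 1, (g (mob (-a) ζ)).re < c := fun ζ hζ =>
    hgc _ (mob_mapsTo (-a) hma hζ)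
  have hga : (g a).re < c := hgc a ha
  have hd : DifferentiableOn ℂ h (ball 0 1) := by
    apply DifferentiableOn.div
    · exact hGdiff.sub (differentiableOn_const _)
    · exact (hGdiff.add (differentiableOn_const _)).sub (differentiableOn_const _)
    · exact fun ζ hζ => psi_den_ne c (g a) _ hga (hGre ζ hζ)
  have hmaps : MapsTo h (ball (0:ℂ) 1) (ball (0:ℂ) 1) := by
    intro ζ hζ
    rw [mem_ball_zero_iff]
    simpa using abs_psi_lt c (g a) _ hga (hGre ζ hζ)
  have h0 : h 0 = 0 := by
    have : mob (-a) 0 = a := by simp [mob]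
    simp [hh, this, psi]
  have hmb : ‖mob a b‖ < 1 := abs_mob_lt a b ha' hb'
  have := Complex.norm_le_norm_of_mapsTo_ball_self hd (hmaps.mono_right ball_subset_closedBall) h0 hmb
  have heq : h (mob a b) = psi c (g a) (g b) := by
    rw [hh]
    simp only []
    rw [mob_inv a b ha' hb']
  rwa [heq] at this

open UpperHalfPlane in
/-- Point of the upper half-plane associated to `p` with `Re p < c`. -/
def mkH (c : ℝ) (p : ℂ) (hp : p.re < c) : UpperHalfPlane :=
  ⟨Complex.I * (c - p), by simp [Complex.sub_im, Complex.sub_re]; linarith⟩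

lemma mkH_coe (c : ℝ) (p : ℂ) (hp : p.re < c) : (mkH c p hp : ℂ) = Complex.I * (c - p) := rfl

lemma mkH_im (c : ℝ) (p : ℂ) (hp : p.re < c) : (mkH c p hp).im = c - p.re := by
  simp [mkH, UpperHalfPlane.im, Complex.sub_im, Complex.sub_re]

lemma artanh_mono {r s : ℝ} (hr : 0 ≤ r) (hrs : r ≤ s) (hs : s < 1) : artanh r ≤ artanh s := by
  rw [artanh, artanh]
  have h1 : (0:ℝ) < 1 - s := by linarith
  have : (1 + r) / (1 - r) ≤ (1 + s) / (1 - s) := by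
    rw [div_le_div_iff₀ (by linarith) h1]
    nlinarith
  have hpos : (0:ℝ) < (1 + r) / (1 - r) := div_pos (by linarith) (by linarith)
  have := Real.log_le_log hpos this
  linarith

lemma arsinh_eq_artanh {u v : ℝ} (hu : 0 ≤ u) (huv : u < v) :
    Real.arsinh (u / (2 * Real.sqrt ((v ^ 2 - u ^ 2) / 4))) = artanh (u / v) := by
  have hv : 0 < v := lt_of_le_of_lt hu huv
  set σ : ℝ := Real.sqrt ((v ^ 2 - u ^ 2) / 4) with hσ
  have hσpos : 0 < σ := Real.sqrt_pos.2 (by nlinarith)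
  have hσsq : σ ^ 2 = (v ^ 2 - u ^ 2) / 4 := Real.sq_sqrt (by nlinarith)
  have harsinh : Real.arsinh (u / (2 * σ)) =
      Real.log (u / (2 * σ) + Real.sqrt (1 + (u / (2 * σ)) ^ 2)) := rfl
  have hsq : 1 + (u / (2 * σ)) ^ 2 = (v / (2 * σ)) ^ 2 := by
    field_simp
    nlinarith
  have hsqrt : Real.sqrt (1 + (u / (2 * σ)) ^ 2) = v / (2 * σ) := by
    rw [hsq, Real.sqrt_sq (by positivity)]
  rw [harsinh, hsqrt, artanh]
  have hq : u / (2 * σ) + v / (2 * σ) = (u + v) / (2 * σ) := by ring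
  rw [hq]
  have hqpos : 0 < (u + v) / (2 * σ) := by positivity
  have hratio : (1 + u / v) / (1 - u / v) = ((u + v) / (2 * σ)) ^ 2 := by
    have huv1 : u / v < 1 := (div_lt_one hv).2 huv
    rw [div_pow]
    rw [div_eq_div_iff (by linarith) (by positivity)]
    have h2 : (2 * σ) ^ 2 = v ^ 2 - u ^ 2 := by nlinarith
    field_simp
    nlinarith
  rw [hratio, Real.log_pow]
  push_cast
  ring

lemma poincareDist_eq_mob (a b : ℂ) : poincareDist a b = artanh (‖mob a b‖) := by
  rw [poincareDist, mob, norm_div, norm_div, norm_sub_rev a b]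

/-- Per-disc estimate: a holomorphic map into the half-plane `{Re < c}` contracts distances
from the Poincaré distance to (half of) the hyperbolic distance on `ℍ`. -/
lemma disc_bound (g : ℂ → ℂ) (hg : DifferentiableOn ℂ g (ball 0 1)) (c : ℝ)
    (hgc : ∀ ζ ∈ ball (0:ℂ) 1, (g ζ).re < c) {a b : ℂ}
    (ha : a ∈ ball (0:ℂ) 1) (hb : b ∈ ball (0:ℂ) 1) :
    dist (mkH c (g a) (hgc a ha)) (mkH c (g b) (hgc b hb)) ≤ 2 * poincareDist a b := by
  have ha' : ‖a‖ < 1 := by simpa [mem_ball_zero_iff] using ha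
  have hb' : ‖b‖ < 1 := by simpa [mem_ball_zero_iff] using hb
  set p := g a with hp
  set q := g b with hq
  have hpc : p.re < c := hgc a ha
  have hqc : q.re < c := hgc b hb
  set u : ℝ := ‖p - q‖ with hu
  set v : ℝ := ‖q + conj p - 2 * c‖ with hv
  have hukey : u = ‖q - p‖ := by rw [hu, norm_sub_rev]
  have hv2 : v ^ 2 = u ^ 2 + 4 * (c - p.re) * (c - q.re) := by
    have := normSq_psi_identity c p q
    have h1 := Complex.sq_norm (q + conj p - 2 * (c:ℂ))
    have h2 := Complex.sq_norm (q - p)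
    rw [hukey, hv]
    nlinarith
  have hxy : 0 < (c - p.re) * (c - q.re) := mul_pos (by linarith) (by linarith)
  have hu0 : 0 ≤ u := norm_nonneg _
  have huv : u < v := by
    have hv0 : 0 ≤ v := norm_nonneg _
    nlinarith
  have hpsi : ‖psi c p q‖ = u / v := by
    rw [psi, norm_div, hukey, hv]
  have hSP : u / v ≤ ‖mob a b‖ := by
    rw [← hpsi]; exact schwarz_pick_halfplane g hg c hgc ha hb
  have hs1 : ‖mob a b‖ < 1 := abs_mob_lt a b ha' hb'
  rw [UpperHalfPlane.dist_eq]
  have hcoe : dist ((mkH c p hpc : ℂ)) ((mkH c q hqc : ℂ)) = u := by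
    rw [mkH_coe, mkH_coe, Complex.dist_eq]
    rw [show Complex.I * (c - p) - Complex.I * (c - q) = Complex.I * (q - p) by ring]
    rw [norm_mul, Complex.norm_I, one_mul, hukey]
  have him : (mkH c p hpc).im * (mkH c q hqc).im = (v ^ 2 - u ^ 2) / 4 := by
    rw [mkH_im, mkH_im, hv2]; ring
  rw [hcoe, him, arsinh_eq_artanh hu0 huv, poincareDist_eq_mob]
  have := artanh_mono (div_nonneg hu0 (by positivity)) hSP hs1
  linarith

/-- Generic chained triangle inequality. -/
lemma chain_dist {X : Type*} [PseudoMetricSpace X] :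
    ∀ (N : ℕ) (Q R : Fin (N + 1) → X), (∀ i : Fin N, R i.castSucc = Q i.succ) →
      dist (Q 0) (R (Fin.last N)) ≤ ∑ i, dist (Q i) (R i) := by
  intro N
  induction N with
  | zero => intro Q R _; simp
  | succ N ih =>
    intro Q R hQR
    have h1 : dist (Q 0) (R (Fin.last (N + 1))) ≤
        dist (Q 0) (R 0) + dist (Q ((0 : Fin (N+1)).succ)) (R (Fin.last (N + 1))) := by
      have := hQR 0
      have h0 : (0 : Fin (N+1)).castSucc = (0 : Fin (N+2)) := rfl
      rw [h0] at this
      rw [this]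
      exact dist_triangle _ _ _
    have h2 : dist (Q ((0 : Fin (N+1)).succ)) (R (Fin.last (N + 1))) ≤
        ∑ i : Fin (N+1), dist (Q i.succ) (R i.succ) := by
      have hlast : R (Fin.last (N + 1)) = (R ∘ Fin.succ) (Fin.last N) := by
        simp [Function.comp, Fin.succ_last]
      rw [hlast]
      exact ih (Q ∘ Fin.succ) (R ∘ Fin.succ) (fun i => by
        have := hQR i.succ
        simp only [Function.comp]
        rw [Fin.succ_castSucc, this])
    calc dist (Q 0) (R (Fin.last (N + 1)))
        ≤ dist (Q 0) (R 0) + dist (Q ((0 : Fin (N+1)).succ)) (R (Fin.last (N + 1))) := h1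
      _ ≤ dist (Q 0) (R 0) + ∑ i : Fin (N+1), dist (Q i.succ) (R i.succ) := by linarith
      _ = ∑ i, dist (Q i) (R i) := by
          rw [Fin.sum_univ_succ (fun i => dist (Q i) (R i))]

/-- The chain set is nonempty for points of an open convex set. -/
lemma chain_nonempty {d : ℕ} (D : Set (EuclideanSpace ℂ (Fin d)))
    (hD_open : IsOpen D) (hD_conv : Convex ℝ D)
    {x y : EuclideanSpace ℂ (Fin d)} (hx : x ∈ D) (hy : y ∈ D) :
    {c : ℝ | ∃ (N : ℕ) (f : Fin (N + 1) → ℂ → EuclideanSpace ℂ (Fin d))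
      (a b : Fin (N + 1) → ℂ),
    (∀ i, DifferentiableOn ℂ (f i) (Metric.ball (0 : ℂ) 1)) ∧
    (∀ i, Set.MapsTo (f i) (Metric.ball (0 : ℂ) 1) D) ∧
    (∀ i, a i ∈ Metric.ball (0 : ℂ) 1) ∧ (∀ i, b i ∈ Metric.ball (0 : ℂ) 1) ∧
    f 0 (a 0) = x ∧ f (Fin.last N) (b (Fin.last N)) = y ∧
    (∀ i : Fin N, f (Fin.castSucc i) (b (Fin.castSucc i)) = f (Fin.succ i) (a (Fin.succ i))) ∧
    c = ∑ i, poincareDist (a i) (b i)}.Nonempty := by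
  by_cases hxy : y = x
  · refine ⟨∑ i : Fin 1, poincareDist 0 0, 0, fun _ _ => x, fun _ => 0, fun _ => 0, ?_, ?_, ?_, ?_, rfl, hxy.symm, ?_, rfl⟩
    · exact fun i => differentiableOn_const x
    · exact fun i ζ _ => hx
    · exact fun i => by simp
    · exact fun i => by simp
    · exact fun i => rfl
  · -- segment from x to y, thickened
    have hseg : segment ℝ x y ⊆ D := hD_conv.segment_subset hx hy
    have hcomp : IsCompact (segment ℝ x y) := by
      rw [segment_eq_image']
      exact (isCompact_Icc.image (by continuity))
    obtain ⟨ε, hε, hthick⟩ := hcomp.exists_thickening_subset_open hD_open hseg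
    set u := y - x with hu
    have hune : u ≠ 0 := sub_ne_zero.2 (fun h => hxy h)
    have hnu : (0:ℝ) < ‖u‖ := norm_pos_iff.2 hune
    set r : ℝ := ε / (2 * ‖u‖) with hr
    have hrpos : 0 < r := by positivity
    obtain ⟨N, hN⟩ := exists_nat_gt (1 / r)
    have hN1 : (0:ℝ) < (N:ℝ) + 1 := by positivity
    rw [div_lt_iff₀ hrpos] at hN
    set f : Fin (N + 1) → ℂ → EuclideanSpace ℂ (Fin d) :=
      fun i ζ => x + ((((i:ℕ):ℂ)/(((N:ℕ):ℂ)+1)) + (r:ℂ) * ζ) • u with hf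
    set bb : ℂ := ((1 / (((N:ℝ) + 1) * r) : ℝ) : ℂ) with hbb
    have hbmem : bb ∈ ball (0:ℂ) 1 := by
      rw [mem_ball_zero_iff, hbb]
      rw [Complex.norm_real, Real.norm_eq_abs, abs_of_pos (by positivity)]
      rw [div_lt_one (by positivity)]
      nlinarith [hN, hrpos]
    have hmaps : ∀ i : Fin (N+1), Set.MapsTo (f i) (Metric.ball (0 : ℂ) 1) D := by
      intro i ζ hζ
      rw [mem_ball_zero_iff] at hζ
      have hti : ((i:ℕ):ℝ) / ((N:ℝ)+1) ∈ Icc (0:ℝ) 1 := by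
        constructor
        · positivity
        · rw [div_le_one hN1]
          have := i.2
          have : ((i:ℕ):ℝ) ≤ (N:ℝ) := by exact_mod_cast Nat.lt_succ_iff.1 i.2
          linarith
      have hcenter : x + (((i:ℕ):ℝ) / ((N:ℝ)+1)) • u ∈ segment ℝ x y := by
        rw [segment_eq_image']
        exact ⟨_, hti, rfl⟩
      have hdist : dist (f i ζ) (x + (((i:ℕ):ℝ) / ((N:ℝ)+1)) • u) < ε := by
        rw [hf]
        simp only []
        rw [dist_eq_norm]
        have hcast : ((((i:ℕ):ℝ) / ((N:ℝ)+1) : ℝ) : ℂ) = (((i:ℕ):ℂ)/(((N:ℕ):ℂ)+1)) := by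
          push_cast; ring
        have : x + ((((i:ℕ):ℂ)/(((N:ℕ):ℂ)+1)) + (r:ℂ) * ζ) • u - (x + (((i:ℕ):ℝ) / ((N:ℝ)+1)) • u)
            = ((r:ℂ) * ζ) • u := by
          rw [← Complex.coe_smul, hcast, add_smul]
          abel
        rw [this, norm_smul]
        have : ‖(r:ℂ) * ζ‖ < r := by
          rw [norm_mul, Complex.norm_real, Real.norm_eq_abs, abs_of_pos hrpos]
          calc r * ‖ζ‖ < r * 1 := by exact mul_lt_mul_of_pos_left hζ hrpos
            _ = r := mul_one r
        calc ‖(r:ℂ)*ζ‖ * ‖u‖ < r * ‖u‖ := by exact mul_lt_mul_of_pos_right this hnu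
          _ = ε / 2 := by rw [hr]; field_simp
          _ < ε := by linarith
      exact hthick (Metric.mem_thickening_iff.2 ⟨_, hcenter, hdist⟩)
    refine ⟨∑ i : Fin (N+1), poincareDist 0 bb, N, f, fun _ => 0, fun _ => bb, ?_, hmaps, ?_, ?_, ?_, ?_, ?_, rfl⟩
    · intro i
      apply DifferentiableOn.add
      · exact differentiableOn_const x
      · exact (((differentiable_const _).add
          ((differentiable_const _).mul differentiable_id)).smul_const u).differentiableOn
    · exact fun i => by simp
    · exact fun i => hbmem
    · rw [hf]; simp
    · rw [hf]
      simp only [Fin.val_last]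
      have : ((((N:ℕ):ℂ))/(((N:ℕ):ℂ)+1) + (r:ℂ) * bb) = 1 := by
        rw [hbb]
        have hrne : (r:ℂ) ≠ 0 := by exact_mod_cast ne_of_gt hrpos
        have hNne : (((N:ℕ):ℂ)+1) ≠ 0 := by
          have h1 : ((N:ℂ)+1) = ((N+1 : ℕ):ℂ) := by push_cast; ring
          rw [h1]
          exact_mod_cast Nat.succ_ne_zero N
        push_cast
        field_simp
      rw [this, one_smul, hu]
      abel
    · intro i
      rw [hf]
      simp only [Fin.coe_castSucc, Fin.val_succ]
      congr 1
      have hrne : (r:ℂ) ≠ 0 := by exact_mod_cast ne_of_gt hrpos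
      have hNne : (((N:ℕ):ℂ)+1) ≠ 0 := by
        have h1 : ((N:ℂ)+1) = ((N+1 : ℕ):ℂ) := by push_cast; ring
        rw [h1]
        exact_mod_cast Nat.succ_ne_zero N
      congr 1
      rw [hbb]
      push_cast
      field_simp
      ring

lemma dist_le_two_kobayashi {d : ℕ} (D : Set (EuclideanSpace ℂ (Fin d)))
    (hD_open : IsOpen D) (hD_conv : Convex ℝ D)
    (Λ : EuclideanSpace ℂ (Fin d) →L[ℂ] ℂ) (c : ℝ) (hc : ∀ p ∈ D, (Λ p).re < c)
    {x y : EuclideanSpace ℂ (Fin d)} (hx : x ∈ D) (hy : y ∈ D) :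
    dist (mkH c (Λ x) (hc x hx)) (mkH c (Λ y) (hc y hy)) ≤ 2 * kobayashiDist D x y := by
  rw [kobayashiDist]
  have hne := chain_nonempty D hD_open hD_conv hx hy
  rw [show (2 : ℝ) * sInf _ = _ from rfl]
  rw [mul_comm]
  rw [← div_le_iff₀ (by norm_num : (0:ℝ) < 2)]
  apply le_csInf hne
  rintro c₀ ⟨N, f, a, b, hd, hmaps, ha, hb, hx0, hyN, hmatch, hsum⟩
  rw [div_le_iff₀ (by norm_num : (0:ℝ) < 2)]
  have hga : ∀ i : Fin (N+1), (Λ (f i (a i))).re < c := fun i => hc _ (hmaps i (ha i))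
  have hgb : ∀ i : Fin (N+1), (Λ (f i (b i))).re < c := fun i => hc _ (hmaps i (hb i))
  set Q : Fin (N+1) → UpperHalfPlane := fun i => mkH c (Λ (f i (a i))) (hga i) with hQ
  set R : Fin (N+1) → UpperHalfPlane := fun i => mkH c (Λ (f i (b i))) (hgb i) with hR
  have hstep : ∀ i : Fin (N+1), dist (Q i) (R i) ≤ 2 * poincareDist (a i) (b i) := by
    intro i
    have hgdiff : DifferentiableOn ℂ (fun ζ => Λ (f i ζ)) (ball 0 1) :=
      Λ.differentiable.comp_differentiableOn (hd i)
    have hgc : ∀ ζ ∈ ball (0:ℂ) 1, ((fun ζ => Λ (f i ζ)) ζ).re < c :=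
      fun ζ hζ => hc _ (hmaps i hζ)
    exact disc_bound (fun ζ => Λ (f i ζ)) hgdiff c hgc (ha i) (hb i)
  have hchain : ∀ i : Fin N, R i.castSucc = Q i.succ := by
    intro i
    apply UpperHalfPlane.ext
    simp only [hR, hQ, mkH]
    rw [hmatch i]
  have htri := chain_dist N Q R hchain
  have hQ0 : Q 0 = mkH c (Λ x) (hc x hx) := by
    apply UpperHalfPlane.ext
    simp only [hQ, mkH]
    rw [hx0]
  have hRN : R (Fin.last N) = mkH c (Λ y) (hc y hy) := by
    apply UpperHalfPlane.ext
    simp only [hR, mkH]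
    rw [hyN]
  rw [hQ0, hRN] at htri
  calc dist (mkH c (Λ x) (hc x hx)) (mkH c (Λ y) (hc y hy))
      ≤ ∑ i, dist (Q i) (R i) := htri
    _ ≤ ∑ i, 2 * poincareDist (a i) (b i) := Finset.sum_le_sum (fun i _ => hstep i)
    _ = c₀ * 2 := by
        rw [hsum, Finset.sum_mul]
        exact Finset.sum_congr rfl (fun i _ => by ring)

lemma sinh_half_log_div {a b : ℝ} (ha : 0 < a) (hb : 0 < b) :
    Real.sinh (|Real.log (a / b)| / 2) = |a - b| / (2 * Real.sqrt (a * b)) := by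
  set X := Real.sqrt (a / b) with hX
  set S := Real.sqrt (a * b) with hS
  have hXpos : 0 < X := Real.sqrt_pos.2 (by positivity)
  have hSpos : 0 < S := Real.sqrt_pos.2 (by positivity)
  have hX2 : X ^ 2 = a / b := Real.sq_sqrt (by positivity)
  have hS2 : S ^ 2 = a * b := Real.sq_sqrt (by positivity)
  have hSe : S = X * b := by
    have h1 : S ^ 2 = (X * b) ^ 2 := by
      rw [hS2, mul_pow, hX2]; field_simp
    calc S = Real.sqrt (S ^ 2) := (Real.sqrt_sq hSpos.le).symm
      _ = Real.sqrt ((X * b) ^ 2) := by rw [h1]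
      _ = X * b := Real.sqrt_sq (by positivity)
  have hexp : Real.exp (Real.log (a / b) / 2) = X := by
    rw [← Real.log_sqrt (by positivity : (0:ℝ) ≤ a / b), Real.exp_log hXpos]
  have hsinh : Real.sinh (Real.log (a / b) / 2) = (X - X⁻¹) / 2 := by
    rw [Real.sinh_eq, Real.exp_neg, hexp]
  have habs : |Real.log (a / b)| / 2 = |Real.log (a / b) / 2| := by
    rw [abs_div]; norm_num
  rw [habs, ← Real.abs_sinh, hsinh]
  have ha2 : a = X ^ 2 * b := by rw [hX2]; field_simp
  rw [abs_div, abs_of_pos (by positivity : (0:ℝ) < 2), hSe, ha2]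
  rw [div_eq_div_iff (by norm_num) (by positivity)]
  have hXb : |X ^ 2 * b - b| = |X - X⁻¹| * (X * b) := by
    have h2 : X ^ 2 * b - b = (X - X⁻¹) * (X * b) := by field_simp
    rw [h2, abs_mul, abs_of_pos (by positivity : (0:ℝ) < X * b)]
  rw [hXb]
  ring

lemma H_dist_ge_log_im (z w : UpperHalfPlane) :
    |Real.log (z.im / w.im)| ≤ dist z w := by
  have ha : 0 < z.im := z.im_pos
  have hb : 0 < w.im := w.im_pos
  rw [UpperHalfPlane.dist_eq]
  have hkey : Real.sinh (|Real.log (z.im / w.im)| / 2)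
      ≤ dist (z : ℂ) (w : ℂ) / (2 * Real.sqrt (z.im * w.im)) := by
    rw [sinh_half_log_div ha hb]
    apply div_le_div_of_nonneg_right ?_ (by positivity)
    rw [Complex.dist_eq]
    calc |z.im - w.im| = |((z:ℂ) - (w:ℂ)).im| := by
          rw [Complex.sub_im, UpperHalfPlane.coe_im, UpperHalfPlane.coe_im]
      _ ≤ ‖(z:ℂ) - (w:ℂ)‖ := Complex.abs_im_le_norm _
  have h2 := Real.arsinh_le_arsinh.2 hkey
  rw [Real.arsinh_sinh] at h2
  linarith

lemma H_dist_ge_log_sq (z w : UpperHalfPlane) :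
    Real.log (‖(z:ℂ) - (w:ℂ)‖ ^ 2 / (4 * (z.im * w.im))) ≤ dist z w := by
  have ha : 0 < z.im := z.im_pos
  have hb : 0 < w.im := w.im_pos
  rcases eq_or_lt_of_le (norm_nonneg ((z:ℂ) - (w:ℂ))) with h0 | hpos
  · rw [← h0]
    norm_num
  · rw [UpperHalfPlane.dist_eq]
    set s := dist (z:ℂ) (w:ℂ) / (2 * Real.sqrt (z.im * w.im)) with hs
    have hdist : dist (z:ℂ) (w:ℂ) = ‖(z:ℂ) - (w:ℂ)‖ := Complex.dist_eq _ _
    have hspos : 0 < s := by rw [hs, hdist]; positivity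
    have hssq : s ^ 2 = ‖(z:ℂ) - (w:ℂ)‖ ^ 2 / (4 * (z.im * w.im)) := by
      rw [hs, hdist, div_pow, mul_pow, Real.sq_sqrt (by positivity : (0:ℝ) ≤ z.im * w.im)]
      norm_num
    have hlog : Real.log (‖(z:ℂ) - (w:ℂ)‖ ^ 2 / (4 * (z.im * w.im)))
        = 2 * Real.log s := by
      rw [← hssq, Real.log_pow]
      norm_num
    rw [hlog]
    have harsinh : Real.log s ≤ Real.arsinh s := by
      have h1 : s ≤ s + Real.sqrt (1 + s ^ 2) := by
        have : (0:ℝ) ≤ Real.sqrt (1 + s ^ 2) := Real.sqrt_nonneg _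
        linarith
      calc Real.log s ≤ Real.log (s + Real.sqrt (1 + s ^ 2)) :=
            Real.log_le_log hspos h1
        _ = Real.arsinh s := rfl
    linarith

lemma abs_lambda_bounded {d : ℕ} (D : Set (EuclideanSpace ℂ (Fin d)))
    (hD_open : IsOpen D) (hD_conv : Convex ℝ D)
    (Λ : EuclideanSpace ℂ (Fin d) →L[ℂ] ℂ) (c : ℝ) (hc : ∀ p ∈ D, (Λ p).re < c)
    (M : ℝ) (hM : 0 < M) (z' w' : ℕ → EuclideanSpace ℂ (Fin d))
    (hz' : ∀ n, z' n ∈ D) (hw' : ∀ n, w' n ∈ D)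
    (hK : ∀ n, kobayashiDist D (z' n) (w' n) < M)
    (ξ : EuclideanSpace ℂ (Fin d)) (hwlim : Tendsto w' atTop (nhds ξ)) :
    ∃ C, ∀ n, ‖Λ (z' n)‖ ≤ C := by
  -- bound on the w'-side
  have hconv : Tendsto (fun n => ‖Λ (w' n)‖) atTop (nhds (‖Λ ξ‖)) := by
    exact (continuous_norm.tendsto _).comp ((Λ.continuous.tendsto _).comp hwlim)
  obtain ⟨W, hW⟩ := hconv.bddAbove_range
  have hWb : ∀ n, ‖Λ (w' n)‖ ≤ W := fun n => hW ⟨n, rfl⟩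
  set B := Real.exp (2 * M) * (c + W) with hB
  refine ⟨W + (1 + 4 * Real.exp (2 * M) * B ^ 2), fun n => ?_⟩
  have hxpos : 0 < c - (Λ (z' n)).re := by have := hc _ (hz' n); linarith
  have hypos : 0 < c - (Λ (w' n)).re := by have := hc _ (hw' n); linarith
  have hyW : c - (Λ (w' n)).re ≤ c + W := by
    have h1 : -(Λ (w' n)).re ≤ ‖Λ (w' n)‖ := by
      have h2 := Complex.abs_re_le_norm (Λ (w' n))
      have h3 := neg_abs_le ((Λ (w' n)).re)
      linarith
    have := hWb n
    linarith
  have hcW : 0 < c + W := lt_of_lt_of_le hypos hyW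
  set zH := mkH c (Λ (z' n)) (hc _ (hz' n)) with hzH
  set wH := mkH c (Λ (w' n)) (hc _ (hw' n)) with hwH
  have hdH : dist zH wH ≤ 2 * M := by
    have := dist_le_two_kobayashi D hD_open hD_conv Λ c hc (hz' n) (hw' n)
    have h2 := hK n
    calc dist zH wH ≤ 2 * kobayashiDist D (z' n) (w' n) := this
      _ ≤ 2 * M := by linarith
  have him1 : zH.im = c - (Λ (z' n)).re := mkH_im _ _ _
  have him2 : wH.im = c - (Λ (w' n)).re := mkH_im _ _ _
  -- C1 bound
  have hx_le : c - (Λ (z' n)).re ≤ Real.exp (2 * M) * (c - (Λ (w' n)).re) := by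
    have h1 := H_dist_ge_log_im zH wH
    rw [him1, him2] at h1
    have h2 : Real.log ((c - (Λ (z' n)).re) / (c - (Λ (w' n)).re)) ≤ 2 * M := by
      have := le_trans (le_abs_self _) (le_trans h1 hdH)
      exact this
    have h3 := (Real.log_le_iff_le_exp (by positivity)).1 h2
    rw [div_le_iff₀ hypos] at h3
    linarith [h3]
  have hxB : c - (Λ (z' n)).re ≤ B := by
    rw [hB]
    calc c - (Λ (z' n)).re ≤ Real.exp (2*M) * (c - (Λ (w' n)).re) := hx_le
      _ ≤ Real.exp (2*M) * (c + W) := by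
          apply mul_le_mul_of_nonneg_left hyW (Real.exp_nonneg _)
  have hyB : c - (Λ (w' n)).re ≤ B := by
    rw [hB]
    calc c - (Λ (w' n)).re ≤ c + W := hyW
      _ = 1 * (c + W) := (one_mul _).symm
      _ ≤ Real.exp (2*M) * (c + W) := by
          apply mul_le_mul_of_nonneg_right ?_ hcW.le
          exact Real.one_le_exp (by positivity)
  -- C2 bound
  set u := ‖Λ (z' n) - Λ (w' n)‖ with hu
  have hcoeu : ‖(zH:ℂ) - (wH:ℂ)‖ = u := by
    rw [hzH, hwH, mkH_coe, mkH_coe]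
    rw [show Complex.I * (c - Λ (z' n)) - Complex.I * (c - Λ (w' n))
        = Complex.I * (Λ (w' n) - Λ (z' n)) by ring]
    rw [norm_mul, Complex.norm_I, one_mul, hu, norm_sub_rev]
  have hu2 : u ^ 2 ≤ 4 * Real.exp (2 * M) * B ^ 2 := by
    rcases eq_or_lt_of_le (norm_nonneg (Λ (z' n) - Λ (w' n))) with h0 | hupos
    · have hzero : u = 0 := by rw [hu, ← h0]
      rw [hzero]
      norm_num
      positivity
    · have h1 := H_dist_ge_log_sq zH wH
      rw [hcoeu, him1, him2] at h1
      have h2 : Real.log (u ^ 2 / (4 * ((c - (Λ (z' n)).re) * (c - (Λ (w' n)).re)))) ≤ 2*M :=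
        le_trans h1 hdH
      have hden : 0 < 4 * ((c - (Λ (z' n)).re) * (c - (Λ (w' n)).re)) := by positivity
      have hupos' : 0 < u := hupos
      have h3 := (Real.log_le_iff_le_exp (div_pos (pow_pos hupos' 2) hden)).1 h2
      rw [div_le_iff₀ hden] at h3
      have hBpos : 0 < B := lt_of_lt_of_le hxpos hxB
      calc u ^ 2 ≤ Real.exp (2*M) * (4 * ((c - (Λ (z' n)).re) * (c - (Λ (w' n)).re))) := h3
        _ ≤ Real.exp (2*M) * (4 * (B * B)) := by
            apply mul_le_mul_of_nonneg_left ?_ (Real.exp_nonneg _)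
            have := mul_le_mul hxB hyB hypos.le hBpos.le
            linarith
        _ = 4 * Real.exp (2 * M) * B ^ 2 := by ring
  have huB : u ≤ 1 + 4 * Real.exp (2 * M) * B ^ 2 := by
    rcases le_or_gt u 1 with h | h
    · have : (0:ℝ) ≤ 4 * Real.exp (2*M) * B ^ 2 := by positivity
      linarith
    · have : u ≤ u ^ 2 := by nlinarith
      linarith
  calc ‖Λ (z' n)‖ ≤ ‖Λ (z' n) - Λ (w' n)‖ + ‖Λ (w' n)‖ := by
        have := norm_sub_le_norm_sub_add_norm_sub (Λ (z' n)) (Λ (w' n)) 0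
        simp at this
        calc ‖Λ (z' n)‖ = ‖(Λ (z' n) - Λ (w' n)) + Λ (w' n)‖ := by
              congr 1; ring
          _ ≤ _ := norm_add_le _ _
    _ ≤ (1 + 4 * Real.exp (2 * M) * B ^ 2) + W := add_le_add huB (hWb n)
    _ = W + (1 + 4 * Real.exp (2 * M) * B ^ 2) := by ring

/-- If `D ⊆ ℂ^d` is an unbounded ℂ-proper convex domain, `‖z_n‖ → ∞` and
`w_n → ξ ∈ ∂D`, then `K_D(z_n, w_n) → ∞`. -/
theorem kobayashi_dist_tendsto_atTop {d : ℕ} (D : Set (EuclideanSpace ℂ (Fin d)))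
    (hD_open : IsOpen D) (hD_conn : IsConnected D) (hD_conv : Convex ℝ D)
    (hD_unb : ¬ Bornology.IsBounded D) (hD_proper : CProper D)
    (z w : ℕ → EuclideanSpace ℂ (Fin d))
    (hz : ∀ n, z n ∈ D) (hw : ∀ n, w n ∈ D)
    (hznorm : Tendsto (fun n => ‖z n‖) atTop atTop)
    (ξ : EuclideanSpace ℂ (Fin d)) (hξ : ξ ∈ frontier D)
    (hwlim : Tendsto w atTop (nhds ξ)) :
    Tendsto (fun n => kobayashiDist D (z n) (w n)) atTop atTop := by
  by_contra hcon
  rw [tendsto_atTop_atTop] at hcon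
  push_neg at hcon
  obtain ⟨b, hb⟩ := hcon
  have hfreq : ∃ᶠ n in atTop, kobayashiDist D (z n) (w n) < b := by
    rw [frequently_atTop]
    intro N
    obtain ⟨n, hn, hlt⟩ := hb N
    exact ⟨n, hn, hlt⟩
  obtain ⟨φ, hφmono, hφ⟩ := Filter.extraction_of_frequently_atTop hfreq
  set M : ℝ := max b 1 with hM
  have hMpos : 0 < M := lt_of_lt_of_le one_pos (le_max_right b 1)
  set z' : ℕ → EuclideanSpace ℂ (Fin d) := z ∘ φ with hz'def
  set w' : ℕ → EuclideanSpace ℂ (Fin d) := w ∘ φ with hw'def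
  have hz' : ∀ n, z' n ∈ D := fun n => hz (φ n)
  have hw' : ∀ n, w' n ∈ D := fun n => hw (φ n)
  have hK : ∀ n, kobayashiDist D (z' n) (w' n) < M :=
    fun n => lt_of_lt_of_le (hφ n) (le_max_left b 1)
  have hz'norm : Tendsto (fun n => ‖z' n‖) atTop atTop :=
    hznorm.comp hφmono.tendsto_atTop
  have hw'lim : Tendsto w' atTop (nhds ξ) := hwlim.comp hφmono.tendsto_atTop
  -- eventually the norm is at least 1
  obtain ⟨N₀, hN₀⟩ := (tendsto_atTop_atTop.1 hz'norm) 1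
  set s : ℕ → EuclideanSpace ℂ (Fin d) := fun n => ‖z' (n + N₀)‖⁻¹ • z' (n + N₀) with hsdef
  have hz'pos : ∀ n : ℕ, 0 < ‖z' (n + N₀)‖ := fun n =>
    lt_of_lt_of_le one_pos (hN₀ (n + N₀) (Nat.le_add_left _ _))
  have hs : ∀ n, s n ∈ sphere (0 : EuclideanSpace ℂ (Fin d)) 1 := by
    intro n
    rw [mem_sphere_zero_iff_norm, hsdef]
    simp only [norm_smul, norm_inv, norm_norm]
    rw [inv_mul_cancel₀ (hz'pos n).ne']
  obtain ⟨v, hvmem, ψ, hψmono, hψlim⟩ :=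
    (isCompact_sphere (0 : EuclideanSpace ℂ (Fin d)) 1).tendsto_subseq hs
  have hvne : v ≠ 0 := by
    rw [mem_sphere_zero_iff_norm] at hvmem
    intro h
    rw [h, norm_zero] at hvmem
    norm_num at hvmem
  -- every complex-linear functional bounded above on D kills v
  have hΛv : ∀ (Λ : EuclideanSpace ℂ (Fin d) →L[ℂ] ℂ) (c : ℝ),
      (∀ p ∈ D, (Λ p).re < c) → Λ v = 0 := by
    intro Λ c hc
    obtain ⟨C, hC⟩ := abs_lambda_bounded D hD_open hD_conv Λ c hc M hMpos z' w' hz' hw' hK ξ hw'lim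
    have hC0 : 0 ≤ C := le_trans (norm_nonneg _) (hC 0)
    have hΛs : ∀ n, ‖Λ (s n)‖ ≤ C * ‖z' (n + N₀)‖⁻¹ := by
      intro n
      rw [hsdef]
      simp only []
      rw [Λ.map_smul_of_tower, norm_smul, norm_inv, norm_norm]
      rw [mul_comm]
      apply mul_le_mul_of_nonneg_right ?_ (by positivity)
      exact hC (n + N₀)
    have htend0 : Tendsto (fun n => Λ (s n)) atTop (nhds 0) := by
      rw [tendsto_zero_iff_norm_tendsto_zero]
      apply squeeze_zero (fun n => norm_nonneg _) hΛs
      have h1 : Tendsto (fun n : ℕ => ‖z' (n + N₀)‖) atTop atTop :=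
        hz'norm.comp (tendsto_add_atTop_nat N₀)
      have h2 : Tendsto (fun n : ℕ => ‖z' (n + N₀)‖⁻¹) atTop (nhds 0) :=
        h1.inv_tendsto_atTop
      simpa using h2.const_mul C
    have h3 : Tendsto (fun n => Λ (s (ψ n))) atTop (nhds 0) :=
      htend0.comp hψmono.tendsto_atTop
    have h4 : Tendsto (fun n => Λ (s (ψ n))) atTop (nhds (Λ v)) :=
      (Λ.continuous.tendsto v).comp hψlim
    exact tendsto_nhds_unique h4 h3
  -- D contains the complex line through w 0 in direction v
  apply hD_proper
  refine ⟨w 0, v, hvne, fun t => ?_⟩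
  by_contra hq
  obtain ⟨f, u, hfD, hfq⟩ := geometric_hahn_banach_open hD_conv hD_open
    (convex_singleton (w 0 + t • v)) (disjoint_singleton_right.2 hq)
  have hfq' : u ≤ f (w 0 + t • v) := hfq _ rfl
  set Λ : EuclideanSpace ℂ (Fin d) →L[ℂ] ℂ := f.extendTo𝕜' with hΛ
  have happly : ∀ x, Λ x = (f x : ℂ) - Complex.I * (f (Complex.I • x) : ℂ) :=
    fun x => ContinuousLinearMap.extendTo𝕜'_apply f x
  have hre : ∀ p ∈ D, (Λ p).re < u := by
    intro p hp
    rw [happly]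
    simp only [Complex.sub_re, Complex.ofReal_re, Complex.mul_re, Complex.I_re, Complex.I_im,
      Complex.ofReal_im]
    norm_num
    exact hfD p hp
  have hv0 := hΛv Λ u hre
  rw [happly] at hv0
  have hfv : f v = 0 := by
    have := congrArg Complex.re hv0
    simp only [Complex.sub_re, Complex.ofReal_re, Complex.mul_re, Complex.I_re, Complex.I_im,
      Complex.ofReal_im, Complex.zero_re] at this
    norm_num at this
    exact this
  have hfiv : f (Complex.I • v) = 0 := by
    have := congrArg Complex.im hv0
    simp only [Complex.sub_im, Complex.ofReal_im, Complex.mul_im, Complex.I_re, Complex.I_im,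
      Complex.ofReal_re, Complex.zero_im] at this
    norm_num at this
    linarith [this]
  have hdec : t • v = (t.re : ℝ) • v + (t.im : ℝ) • (Complex.I • v) := by
    rw [← Complex.coe_smul, ← Complex.coe_smul, smul_smul, ← add_smul, Complex.re_add_im]
  have : f (w 0 + t • v) = f (w 0) := by
    rw [map_add, hdec, map_add, map_smul, map_smul, hfv, hfiv]
    simp
  rw [this] at hfq'
  exact absurd (hfD _ (hw 0)) (not_lt.2 hfq')

end
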